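/- Let l ≥ 1 and let u_1, …, u_l, t be integers with 1 < u_1 ≤ u_2 ≤ ⋯ ≤ u_l and t ≥ 1. Then the following are equivalent: (i) for every integer s with 0 ≤ s ≤ t + u_1 + u_2 + ⋯ + u_l there exist x_1, …, x_l ∈ {0,1} and y ∈ {0, 1, 2, …, t} such that s = y + x_1u_1 + x_2u_2 + ⋯ + x_lu_l; (ii) for every k with 1 ≤ k ≤ l, the inequality t + Σ_{i=1}^{k−1} u_i ≥ u_k − 1 holds. In particular, the condition t ≥ u_l − 1 is sufficient for (i). -/

import Mathlib

/-- Every integer `s` with `0 ≤ s ≤ t + u₁ + ⋯ + u_l` can be written as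
`s = y + x₁u₁ + ⋯ + x_lu_l` with each `x_i ∈ {0,1}` and `y ∈ {0,1,…,t}`. -/
def ReprAll (l : ℕ) (u : Fin l → ℤ) (t : ℤ) : Prop :=
  ∀ s : ℤ, 0 ≤ s → s ≤ t + ∑ i, u i →
    ∃ (x : Fin l → ℤ) (y : ℤ), (∀ i, x i = 0 ∨ x i = 1) ∧ 0 ≤ y ∧ y ≤ t ∧
      s = y + ∑ i, x i * u i

lemma repr_aux (t : ℤ) : ∀ (l : ℕ) (u : ℕ → ℤ),
    (∀ k < l, u k - 1 ≤ t + ∑ i ∈ Finset.range k, u i) →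
    ∀ s : ℤ, 0 ≤ s → s ≤ t + ∑ i ∈ Finset.range l, u i →
    ∃ (x : ℕ → ℤ) (y : ℤ), (∀ i, x i = 0 ∨ x i = 1) ∧ 0 ≤ y ∧ y ≤ t ∧
      s = y + ∑ i ∈ Finset.range l, x i * u i := by
  intro l
  induction l with
  | zero =>
    intro u _ s hs0 hs1
    exact ⟨0, s, fun i => Or.inl rfl, hs0, by simpa using hs1, by simp⟩
  | succ n ih =>
    intro u hcond s hs0 hs1
    by_cases h : s ≤ t + ∑ i ∈ Finset.range n, u i
    · obtain ⟨x, y, hx, hy0, hy1, hres⟩ := ih u (fun k hk => hcond k (by omega)) s hs0 h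
      refine ⟨Function.update x n 0, y, ?_, hy0, hy1, ?_⟩
      · intro i
        by_cases hi : i = n
        · subst hi; simp
        · rw [Function.update_of_ne hi]; exact hx i
      · have hsum : ∑ i ∈ Finset.range n, Function.update x n 0 i * u i
            = ∑ i ∈ Finset.range n, x i * u i := by
          refine Finset.sum_congr rfl fun i hi => ?_
          have : i ≠ n := by simp at hi; omega
          rw [Function.update_of_ne this]
        rw [Finset.sum_range_succ, hsum, Function.update_self, zero_mul, add_zero]
        exact hres
    · push_neg at h
      have hun : u n - 1 ≤ t + ∑ i ∈ Finset.range n, u i := hcond n (Nat.lt_succ_self n)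
      rw [Finset.sum_range_succ] at hs1
      obtain ⟨x, y, hx, hy0, hy1, hres⟩ := ih u (fun k hk => hcond k (by omega)) (s - u n)
        (by linarith) (by linarith)
      refine ⟨Function.update x n 1, y, ?_, hy0, hy1, ?_⟩
      · intro i
        by_cases hi : i = n
        · subst hi; simp
        · rw [Function.update_of_ne hi]; exact hx i
      · have hsum : ∑ i ∈ Finset.range n, Function.update x n 1 i * u i
            = ∑ i ∈ Finset.range n, x i * u i := by
          refine Finset.sum_congr rfl fun i hi => ?_
          have : i ≠ n := by simp at hi; omega
          rw [Function.update_of_ne this]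
        rw [Finset.sum_range_succ, hsum, Function.update_self, one_mul]
        linarith

/-- Let `1 < u₁ ≤ u₂ ≤ ⋯ ≤ u_l` and `t ≥ 1` be integers. Every `s` with
`0 ≤ s ≤ t + u₁ + ⋯ + u_l` is representable as `y + x₁u₁ + ⋯ + x_lu_l`
with `x_i ∈ {0,1}`, `0 ≤ y ≤ t`, if and only if for every `k`,
`t + ∑_{i<k} u_i ≥ u_k - 1`. In particular `t ≥ u_l - 1` is sufficient. -/
theorem repr_all_iff (l : ℕ) (hl : 1 ≤ l) (u : Fin l → ℤ) (t : ℤ)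
    (hmono : Monotone u) (hu : ∀ i, 1 < u i) (ht : 1 ≤ t) :
    (ReprAll l u t ↔
      ∀ k : Fin l, u k - 1 ≤ t + ∑ i ∈ Finset.univ.filter (fun i => i < k), u i)
    ∧ (u ⟨l - 1, by omega⟩ - 1 ≤ t → ReprAll l u t) := by
  have key : ReprAll l u t ↔
      ∀ k : Fin l, u k - 1 ≤ t + ∑ i ∈ Finset.univ.filter (fun i => i < k), u i := by
    constructor
    · -- ReprAll → condition
      intro hrep k
      by_contra hcon
      push_neg at hcon
      set P := ∑ i ∈ Finset.univ.filter (fun i => i < k), u i with hP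
      have hPnn : 0 ≤ P :=
        Finset.sum_nonneg fun i _ => le_of_lt (lt_trans zero_lt_one (hu i))
      have hk_mem : k ∈ Finset.univ.filter (fun i => ¬ i < k) := by simp
      have hB : u k ≤ ∑ i ∈ Finset.univ.filter (fun i => ¬ i < k), u i :=
        Finset.single_le_sum (fun i _ => le_of_lt (lt_trans zero_lt_one (hu i))) hk_mem
      have hsplit : ∑ i, u i
          = P + ∑ i ∈ Finset.univ.filter (fun i => ¬ i < k), u i :=
        (Finset.sum_filter_add_sum_filter_not _ _ _).symm
      obtain ⟨x, y, hx, hy0, hy1, hres⟩ := hrep (t + P + 1) (by linarith) (by linarith)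
      have hxsplit : ∑ i, x i * u i
          = ∑ i ∈ Finset.univ.filter (fun i => i < k), x i * u i
            + ∑ i ∈ Finset.univ.filter (fun i => ¬ i < k), x i * u i :=
        (Finset.sum_filter_add_sum_filter_not _ _ _).symm
      have hA : ∑ i ∈ Finset.univ.filter (fun i => i < k), x i * u i ≤ P := by
        refine Finset.sum_le_sum fun i _ => ?_
        rcases hx i with h | h <;> rw [h] <;> [skip; rw [one_mul]] <;>
          simp <;> linarith [hu i]
      have hAnn : 0 ≤ ∑ i ∈ Finset.univ.filter (fun i => i < k), x i * u i := by
        refine Finset.sum_nonneg fun i _ => ?_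
        rcases hx i with h | h <;> rw [h] <;> simp <;> linarith [hu i]
      by_cases hall : ∀ i ∈ Finset.univ.filter (fun i => ¬ i < k), x i = 0
      · have hz : ∑ i ∈ Finset.univ.filter (fun i => ¬ i < k), x i * u i = 0 :=
          Finset.sum_eq_zero fun i hi => by rw [hall i hi, zero_mul]
        rw [hxsplit, hz] at hres
        linarith
      · push_neg at hall
        obtain ⟨j, hj, hxj⟩ := hall
        have hxj1 : x j = 1 := (hx j).resolve_left hxj
        have hkj : k ≤ j := by
          simpa using hj
        have hj' : j ∈ Finset.univ.filter (fun i => ¬ i < k) := by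
          simp [not_lt, hkj]
        have hBx : u k ≤ ∑ i ∈ Finset.univ.filter (fun i => ¬ i < k), x i * u i := by
          have h1 : x j * u j ≤ ∑ i ∈ Finset.univ.filter (fun i => ¬ i < k), x i * u i := by
            refine Finset.single_le_sum (f := fun i => x i * u i) (fun i _ => ?_) hj'
            rcases hx i with h | h <;> rw [h] <;> simp <;> linarith [hu i]
          rw [hxj1, one_mul] at h1
          exact le_trans (hmono hkj) h1
        rw [hxsplit] at hres
        linarith
    · -- condition → ReprAll
      intro hcond s hs0 hs1
      set U : ℕ → ℤ := fun n => if h : n < l then u ⟨n, h⟩ else 0 with hU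
      have hUval : ∀ i : Fin l, U i.val = u i := by
        intro i; simp only [hU, i.isLt, dif_pos]
      have hfull : ∑ i, u i = ∑ n ∈ Finset.range l, U n := by
        rw [← Fin.sum_univ_eq_sum_range]
        exact Finset.sum_congr rfl fun i _ => (hUval i).symm
      have hfilt : ∀ k : Fin l,
          ∑ i ∈ Finset.univ.filter (fun i => i < k), u i
            = ∑ n ∈ Finset.range k.val, U n := by
        intro k
        rw [Finset.sum_filter]
        have h1 : ∑ i : Fin l, (if i < k then u i else 0)
            = ∑ i : Fin l, (fun n => if n < k.val then U n else 0) i.val := by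
          refine Finset.sum_congr rfl fun i _ => ?_
          simp only [Fin.lt_def]
          by_cases hik : i.val < k.val
          · rw [if_pos hik, if_pos hik, hUval]
          · rw [if_neg hik, if_neg hik]
        rw [h1, Fin.sum_univ_eq_sum_range (fun n => if n < k.val then U n else 0) l]
        rw [← Finset.sum_subset (Finset.range_subset_range.2 k.isLt.le)
          (fun n _ hn => if_neg (by simpa using hn))]
        exact Finset.sum_congr rfl fun n hn => if_pos (Finset.mem_range.mp hn)
      obtain ⟨x, y, hx, hy0, hy1, hres⟩ := repr_aux t l U
        (fun m hm => by
          have := hcond ⟨m, hm⟩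
          rw [hfilt ⟨m, hm⟩] at this
          simpa [hU, hm] using this)
        s hs0 (by rwa [← hfull])
      refine ⟨fun i => x i.val, y, fun i => hx i.val, hy0, hy1, ?_⟩
      have : ∑ i : Fin l, x i.val * u i = ∑ n ∈ Finset.range l, x n * U n := by
        rw [← Fin.sum_univ_eq_sum_range (fun n => x n * U n)]
        exact Finset.sum_congr rfl fun i _ => by rw [hUval]
      rw [this]
      exact hres
  refine ⟨key, fun hlast => key.mpr fun k => ?_⟩
  have hPnn : 0 ≤ ∑ i ∈ Finset.univ.filter (fun i => i < k), u i :=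
    Finset.sum_nonneg fun i _ => le_of_lt (lt_trans zero_lt_one (hu i))
  have hk : u k ≤ u ⟨l - 1, by omega⟩ := by
    apply hmono
    have := k.isLt
    simp only [Fin.le_def]
    omega
  linarith
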